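/- Let C be an abelian category and 𝒲 a class of objects of C closed under isomorphisms, finite direct sums, and cokernels of monomorphisms (i.e., for every short exact sequence 0→A→B→C→0 with A, B ∈ 𝒲 one has C ∈ 𝒲). Let 0→Y₁→Y₀→Y→0 be a short exact sequence in C, let (W₀ⁱ)_{i≥0} be the terms of a coproper 𝒲-coresolution of Y₀ and (W₁ⁱ)_{i≥0} the terms of a coproper 𝒲-coresolution of Y₁. Then there exists an object W ∈ 𝒲 such that: (1) Y admits a coproper 𝒲-coresolution whose 0-th term is W and whose i-th term is W₀ⁱ ⊕ W₁^{i+1} for all i ≥ 1, and there is a short exact sequence 0→W₁⁰→W₀⁰⊕W₁¹→W→0; (2) if the two given coproper 𝒲-coresolutions are Hom(𝒲,−)-exact and the short exact sequence 0→Y₁→Y₀→Y→0 is Hom(𝒲,−)-exact, then the coproper 𝒲-coresolution of Y in (1) can be chosen Hom(𝒲,−)-exact. -/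

import Mathlib

open CategoryTheory Category Limits

universe v u

variable {C : Type u} [Category.{v} C] [Abelian C]

def SES {A B X : C} (f : A ⟶ B) (g : B ⟶ X) : Prop :=
  ∃ w : f ≫ g = 0, (CategoryTheory.ShortComplex.mk f g w).ShortExact

def CovExact (𝒲 : Set C) {A B X : C} (f : A ⟶ B) (g : B ⟶ X) : Prop :=
  ∀ W ∈ 𝒲,
    (Function.Injective fun u : W ⟶ A => u ≫ f) ∧
    (∀ v : W ⟶ B, v ≫ g = 0 → ∃ u : W ⟶ A, u ≫ f = v) ∧
    (Function.Surjective fun v : W ⟶ B => v ≫ g)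

def ContraExact (𝒲 : Set C) {A B X : C} (f : A ⟶ B) (g : B ⟶ X) : Prop :=
  ∀ W ∈ 𝒲,
    (Function.Injective fun u : X ⟶ W => g ≫ u) ∧
    (∀ v : B ⟶ W, f ≫ v = 0 → ∃ u : X ⟶ W, g ≫ u = v) ∧
    (Function.Surjective fun v : B ⟶ W => f ≫ v)

/-- A proper `𝒲`-resolution of `A` with terms `W i`: short exact sequences
`0 ⟶ K (i+1) ⟶ W i ⟶ K i ⟶ 0` with `K 0 = A`, each `W i ∈ 𝒲`, each `Hom(𝒲,-)`-exact. -/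
structure ProperResolution (𝒲 : Set C) (A : C) (W : ℕ → C) where
  K : ℕ → C
  hK : K 0 = A
  g : ∀ i, K (i + 1) ⟶ W i
  f : ∀ i, W i ⟶ K i
  mem : ∀ i, W i ∈ 𝒲
  ses : ∀ i, SES (g i) (f i)
  proper : ∀ i, CovExact 𝒲 (g i) (f i)

/-- The proper resolution is in addition `Hom(-,𝒲)`-exact. -/
def ProperResolution.IsContraExact {𝒲 : Set C} {A : C} {W : ℕ → C}
    (R : ProperResolution 𝒲 A W) : Prop :=
  ∀ i, ContraExact 𝒲 (R.g i) (R.f i)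

/-- A coproper `𝒲`-coresolution of `A` with terms `W i`: short exact sequences
`0 ⟶ K i ⟶ W i ⟶ K (i+1) ⟶ 0` with `K 0 = A`, each `W i ∈ 𝒲`, each `Hom(-,𝒲)`-exact. -/
structure CoproperCoresolution (𝒲 : Set C) (A : C) (W : ℕ → C) where
  K : ℕ → C
  hK : K 0 = A
  g : ∀ i, K i ⟶ W i
  f : ∀ i, W i ⟶ K (i + 1)
  mem : ∀ i, W i ∈ 𝒲
  ses : ∀ i, SES (g i) (f i)
  coproper : ∀ i, ContraExact 𝒲 (g i) (f i)

/-- The coproper coresolution is in addition `Hom(𝒲,-)`-exact. -/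
def CoproperCoresolution.IsCovExact {𝒲 : Set C} {A : C} {W : ℕ → C}
    (R : CoproperCoresolution 𝒲 A W) : Prop :=
  ∀ i, CovExact 𝒲 (R.g i) (R.f i)

/-- Membership in the Gorenstein category `G(𝒲)`: `X` admits both a proper `𝒲`-resolution
which is `Hom(-,𝒲)`-exact and a coproper `𝒲`-coresolution which is `Hom(𝒲,-)`-exact
(i.e. a complete `𝒲`-resolution). -/
def MemGW (𝒲 : Set C) (X : C) : Prop :=
  (∃ (W : ℕ → C) (R : ProperResolution 𝒲 X W), R.IsContraExact) ∧
  (∃ (W : ℕ → C) (R : CoproperCoresolution 𝒲 X W), R.IsCovExact)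


section Aux

open ZeroObject

lemma aux_w {A B X : C} {f : A ⟶ B} {g : B ⟶ X} (h : SES f g) : f ≫ g = 0 := h.1

lemma aux_mono {A B X : C} {f : A ⟶ B} {g : B ⟶ X} (h : SES f g) : Mono f := by
  obtain ⟨w, hw⟩ := h; exact hw.mono_f

lemma aux_epi {A B X : C} {f : A ⟶ B} {g : B ⟶ X} (h : SES f g) : Epi g := by
  obtain ⟨w, hw⟩ := h; exact hw.epi_g

lemma aux_desc {A B X V : C} {f : A ⟶ B} {g : B ⟶ X} (h : SES f g) (k : B ⟶ V)
    (hk : f ≫ k = 0) : ∃ u : X ⟶ V, g ≫ u = k := by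
  obtain ⟨w, hw⟩ := h
  haveI := hw.epi_g
  exact ⟨hw.exact.desc k hk, hw.exact.g_desc k hk⟩

lemma aux_lift {A B X V : C} {f : A ⟶ B} {g : B ⟶ X} (h : SES f g) (k : V ⟶ B)
    (hk : k ≫ g = 0) : ∃ u : V ⟶ A, u ≫ f = k := by
  obtain ⟨w, hw⟩ := h
  haveI := hw.mono_f
  exact ⟨hw.exact.lift k hk, hw.exact.lift_f k hk⟩

lemma aux_ofIso {A A' B B' X X' : C} (eA : A ≅ A') (eB : B ≅ B') (eX : X ≅ X')
    {f : A ⟶ B} {g : B ⟶ X} {f' : A' ⟶ B'} {g' : B' ⟶ X'}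
    (c1 : eA.hom ≫ f' = f ≫ eB.hom) (c2 : eB.hom ≫ g' = g ≫ eX.hom)
    (h : SES f g) : SES f' g' := by
  obtain ⟨w, hw⟩ := h
  have w' : f' ≫ g' = 0 := by
    rw [← cancel_epi eA.hom, ← assoc, c1, assoc, c2, ← assoc, w, zero_comp, comp_zero]
  exact ⟨w', (ShortComplex.shortExact_iff_of_iso
    (ShortComplex.isoMk eA eB eX c1 c2 : ShortComplex.mk f g w ≅ ShortComplex.mk f' g' w')).1 hw⟩

lemma aux_cok {A B : C} (f : A ⟶ B) [Mono f] : SES f (cokernel.π f) :=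
  ⟨cokernel.condition f, ShortComplex.ShortExact.mk'
    (ShortComplex.exact_of_g_is_cokernel _ (cokernelIsCokernel f)) inferInstance inferInstance⟩

lemma aux_split_inl (X Y : C) : SES (biprod.inl : X ⟶ X ⊞ Y) (biprod.snd : X ⊞ Y ⟶ Y) :=
  ⟨by simp, (ShortComplex.Splitting.ofHasBinaryBiproduct X Y).shortExact⟩

lemma aux_split_inr (X Y : C) : SES (biprod.inr : Y ⟶ X ⊞ Y) (biprod.fst : X ⊞ Y ⟶ X) := by
  refine aux_ofIso (Iso.refl Y) (biprod.braiding Y X) (Iso.refl X) ?_ ?_ (aux_split_inl Y X)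
  · ext <;> simp
  · ext <;> simp

lemma aux_ses_zero_id (A : C) : SES (0 : (0 : C) ⟶ A) (𝟙 A) :=
  ⟨zero_comp, (ShortComplex.Splitting.ofIsZeroOfIsIso _ (isZero_zero C) inferInstance).shortExact⟩

lemma aux_ses_id_zero (A : C) : SES (𝟙 A) (0 : A ⟶ (0 : C)) :=
  ⟨comp_zero, (ShortComplex.Splitting.ofIsIsoOfIsZero _ inferInstance (isZero_zero C)).shortExact⟩

end Aux

section ThreeByThree

attribute [local instance] CategoryTheory.Abelian.Pseudoelement.objectToSort
  CategoryTheory.Abelian.Pseudoelement.homToFun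

open CategoryTheory.Abelian.Pseudoelement

lemma aux_33 {X1 X2 X3 Y1 Y2 Y3 Z1 Z2 Z3 : C}
    {f1 : X1 ⟶ X2} {g1 : X2 ⟶ X3} {f2 : Y1 ⟶ Y2} {g2 : Y2 ⟶ Y3} {f3 : Z1 ⟶ Z2} {g3 : Z2 ⟶ Z3}
    {m1 : X1 ⟶ Y1} {m2 : X2 ⟶ Y2} {m3 : X3 ⟶ Y3}
    {p1 : Y1 ⟶ Z1} {p2 : Y2 ⟶ Z2} {p3 : Y3 ⟶ Z3}
    (hr1 : SES f1 g1) (hr2 : SES f2 g2)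
    (hc1 : SES m1 p1) (hc2 : SES m2 p2) (hc3 : SES m3 p3)
    (sq1 : f1 ≫ m2 = m1 ≫ f2) (sq2 : g1 ≫ m3 = m2 ≫ g2)
    (sq3 : f2 ≫ p2 = p1 ≫ f3) (sq4 : g2 ≫ p3 = p2 ≫ g3) :
    SES f3 g3 := by
  haveI hm3 : Mono m3 := aux_mono hc3
  haveI hmono_f2 : Mono f2 := aux_mono hr2
  haveI hep1 : Epi p1 := aux_epi hc1
  haveI hep2 : Epi p2 := aux_epi hc2
  haveI heg1 : Epi g1 := aux_epi hr1
  haveI heg2 : Epi g2 := aux_epi hr2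
  haveI hep3 : Epi p3 := aux_epi hc3
  obtain ⟨w1, hw1⟩ := hr1
  obtain ⟨w2, hw2⟩ := hr2
  obtain ⟨wc1, hwc1⟩ := hc1
  obtain ⟨wc2, hwc2⟩ := hc2
  obtain ⟨wc3, hwc3⟩ := hc3
  -- f3 ≫ g3 = 0
  have w3 : f3 ≫ g3 = 0 := by
    rw [← cancel_epi p1, ← assoc, ← sq3, assoc, ← sq4, ← assoc, w2, zero_comp, comp_zero]
  -- epi g3
  haveI : Epi (p2 ≫ g3) := by rw [← sq4]; exact epi_comp g2 p3
  haveI heg3 : Epi g3 := epi_of_epi p2 g3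
  -- mono f3
  haveI hmf3 : Mono f3 := by
    apply mono_of_zero_of_map_zero
    intro a ha
    obtain ⟨b, hb⟩ := pseudo_surjective_of_epi p1 a
    have hb2 : p2 (f2 b) = 0 := by
      rw [← Abelian.Pseudoelement.comp_apply, sq3, Abelian.Pseudoelement.comp_apply, hb, ha]
    obtain ⟨c, hc⟩ := pseudo_exact_of_exact hwc2.exact _ hb2
    have hgc : m3 (g1 c) = 0 := by
      rw [← Abelian.Pseudoelement.comp_apply, sq2, Abelian.Pseudoelement.comp_apply, hc, ← Abelian.Pseudoelement.comp_apply, w2, Abelian.Pseudoelement.zero_apply]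
    have hg1c : g1 c = 0 := zero_of_map_zero _ (pseudo_injective_of_mono m3) _ hgc
    obtain ⟨d, hd⟩ := pseudo_exact_of_exact hw1.exact _ hg1c
    have : f2 (m1 d) = f2 b := by
      rw [← Abelian.Pseudoelement.comp_apply, ← sq1, Abelian.Pseudoelement.comp_apply, hd, hc]
    have hmd : m1 d = b := pseudo_injective_of_mono f2 this
    rw [← hb, ← hmd, ← Abelian.Pseudoelement.comp_apply, wc1, Abelian.Pseudoelement.zero_apply]
  -- exactness
  have hex : ∀ b : Z2, g3 b = 0 → ∃ a, f3 a = b := by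
    intro b hb
    obtain ⟨y, hy⟩ := pseudo_surjective_of_epi p2 b
    have h1 : p3 (g2 y) = 0 := by
      rw [← Abelian.Pseudoelement.comp_apply, sq4, Abelian.Pseudoelement.comp_apply, hy, hb]
    obtain ⟨x3, hx3⟩ := pseudo_exact_of_exact hwc3.exact _ h1
    obtain ⟨x2, hx2⟩ := pseudo_surjective_of_epi g1 x3
    have heq : g2 (m2 x2) = g2 y := by
      rw [← Abelian.Pseudoelement.comp_apply, ← sq2, Abelian.Pseudoelement.comp_apply, hx2, hx3]
    obtain ⟨z, hz0, hz⟩ := sub_of_eq_image g2 y (m2 x2) heq.symm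
    obtain ⟨y1, hy1⟩ := pseudo_exact_of_exact hw2.exact z hz0
    refine ⟨p1 y1, ?_⟩
    have hp2z : p2 z = p2 y := hz _ p2 (by
      rw [← Abelian.Pseudoelement.comp_apply, wc2, Abelian.Pseudoelement.zero_apply])
    have : f3 (p1 y1) = p2 (f2 y1) := by
      rw [← Abelian.Pseudoelement.comp_apply, ← sq3, Abelian.Pseudoelement.comp_apply]
    rw [this, hy1, hp2z, hy]
  exact ⟨w3, ShortComplex.ShortExact.mk' (exact_of_pseudo_exact _ hex) hmf3 heg3⟩

end ThreeByThree

section Step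


lemma aux_contra (𝒲 : Set C) {A B X : C} {f : A ⟶ B} {g : B ⟶ X} (h : SES f g)
    (hs : ∀ V ∈ 𝒲, ∀ u : A ⟶ V, ∃ w : B ⟶ V, f ≫ w = u) : ContraExact 𝒲 f g := by
  intro V hV
  haveI := aux_epi h
  exact ⟨fun u u' e => (cancel_epi g).1 e, fun v hv => aux_desc h v hv, fun u => hs V hV u⟩

lemma aux_cov (𝒲 : Set C) {A B X : C} {f : A ⟶ B} {g : B ⟶ X} (h : SES f g)
    (hs : ∀ V ∈ 𝒲, ∀ u : V ⟶ X, ∃ w : V ⟶ B, w ≫ g = u) : CovExact 𝒲 f g := by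
  intro V hV
  haveI := aux_mono h
  exact ⟨fun u u' e => (cancel_mono f).1 e, fun v hv => aux_lift h v hv, fun u => hs V hV u⟩

structure ExtTower (𝒲 : Set C) (S Q : C) : Type (max u v) where
  T : C
  m : S ⟶ T
  p : T ⟶ Q
  hses : SES m p
  hext : ∀ V ∈ 𝒲, ∀ u : S ⟶ V, ∃ w : T ⟶ V, m ≫ w = u

noncomputable def aux_step (𝒲 : Set C) {S Q VS BS VQ BQ : C}
    (gS : S ⟶ VS) (fS : VS ⟶ BS) (gQ : Q ⟶ VQ) (fQ : VQ ⟶ BQ)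
    (hVS : VS ∈ 𝒲) (hVQ : VQ ∈ 𝒲)
    (hS : SES gS fS) (hQ : SES gQ fQ)
    (hSE : ∀ V ∈ 𝒲, ∀ u : S ⟶ V, ∃ w : VS ⟶ V, gS ≫ w = u)
    (hQE : ∀ V ∈ 𝒲, ∀ u : Q ⟶ V, ∃ w : VQ ⟶ V, gQ ≫ w = u)
    (t : ExtTower 𝒲 S Q) :
    Σ' (t' : ExtTower 𝒲 BS BQ) (G : t.T ⟶ VS ⊞ VQ) (F : VS ⊞ VQ ⟶ t'.T),
      SES G F ∧
      (∀ V ∈ 𝒲, ∀ u : t.T ⟶ V, ∃ w : VS ⊞ VQ ⟶ V, G ≫ w = u) ∧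
      ((∀ V ∈ 𝒲, ∀ u : V ⟶ BS, ∃ w : V ⟶ VS, w ≫ fS = u) →
       (∀ V ∈ 𝒲, ∀ u : V ⟶ BQ, ∃ w : V ⟶ VQ, w ≫ fQ = u) →
        CovExact 𝒲 G F) :=
  let e : t.T ⟶ VS := (t.hext VS hVS gS).choose
  have he : t.m ≫ e = gS := (t.hext VS hVS gS).choose_spec
  let G : t.T ⟶ VS ⊞ VQ := biprod.lift e (t.p ≫ gQ)
  have hGfst : G ≫ biprod.fst = e := biprod.lift_fst _ _
  have hGsnd : G ≫ biprod.snd = t.p ≫ gQ := biprod.lift_snd _ _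
  have hmG : Mono G := by
    apply Preadditive.mono_of_cancel_zero
    intro P u hu
    have h1 : u ≫ e = 0 := by
      have h := hu =≫ biprod.fst
      rw [assoc, hGfst, zero_comp] at h; exact h
    have h2 : u ≫ t.p = 0 := by
      haveI := aux_mono hQ
      have h := hu =≫ biprod.snd
      rw [assoc, hGsnd, zero_comp, ← assoc] at h
      exact zero_of_comp_mono gQ h
    obtain ⟨v, hv⟩ := aux_lift t.hses u h2
    have hv0 : v = 0 := by
      haveI := aux_mono hS
      apply zero_of_comp_mono gS
      rw [← he, ← assoc, hv, h1]
    rw [← hv, hv0, zero_comp]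
  have hGF : SES G (cokernel.π G) := @aux_cok _ _ _ _ _ G hmG
  let F : VS ⊞ VQ ⟶ cokernel G := cokernel.π G
  have hag : t.m ≫ G = gS ≫ biprod.inl := by
    apply biprod.hom_ext
    · rw [assoc, hGfst, he, assoc, biprod.inl_fst, comp_id]
    · rw [assoc, hGsnd, ← assoc, aux_w t.hses, zero_comp, assoc, biprod.inl_snd, comp_zero]
  have hinlF : gS ≫ (biprod.inl ≫ F) = 0 := by
    rw [← assoc, ← hag, assoc, cokernel.condition, comp_zero]
  let β : BS ⟶ cokernel G := (aux_desc hS (biprod.inl ≫ F) hinlF).choose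
  have hβ : fS ≫ β = biprod.inl ≫ F := (aux_desc hS (biprod.inl ≫ F) hinlF).choose_spec
  have hGdesc : G ≫ biprod.desc 0 fQ = 0 := by
    rw [biprod.lift_desc, comp_zero, zero_add, assoc, aux_w hQ, comp_zero]
  let γ : cokernel G ⟶ BQ := cokernel.desc G (biprod.desc 0 fQ) hGdesc
  have hγ : F ≫ γ = biprod.desc 0 fQ := cokernel.π_desc _ _ _
  have hsnddesc : (biprod.snd : VS ⊞ VQ ⟶ VQ) ≫ fQ = biprod.desc 0 fQ := by
    apply biprod.hom_ext'
    · rw [← assoc, biprod.inl_snd, zero_comp, biprod.inl_desc]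
    · rw [← assoc, biprod.inr_snd, id_comp, biprod.inr_desc]
  have hrow3 : SES β γ :=
    aux_33 t.hses (aux_split_inl VS VQ) hS hGF hQ hag hGsnd.symm hβ.symm
      (by rw [hγ, hsnddesc])
  have hextBot : ∀ V ∈ 𝒲, ∀ u : BS ⟶ V, ∃ w : cokernel G ⟶ V, β ≫ w = u := by
    intro V hV u
    have hψ : t.m ≫ (e ≫ fS ≫ u) = 0 := by
      rw [← assoc, he, ← assoc, aux_w hS, zero_comp]
    obtain ⟨q, hq⟩ := aux_desc t.hses (e ≫ fS ≫ u) hψ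
    obtain ⟨t2, ht2⟩ := hQE V hV q
    have hc : G ≫ biprod.desc (fS ≫ u) (-t2) = 0 := by
      rw [biprod.lift_desc, Preadditive.comp_neg, assoc, ht2, hq, ← assoc]
      exact add_neg_cancel _
    refine ⟨cokernel.desc G _ hc, ?_⟩
    haveI := aux_epi hS
    rw [← cancel_epi fS, ← assoc, hβ, assoc, cokernel.π_desc, biprod.inl_desc]
  have hGE : ∀ V ∈ 𝒲, ∀ u : t.T ⟶ V, ∃ w : VS ⊞ VQ ⟶ V, G ≫ w = u := by
    intro V hV u
    obtain ⟨w1, hw1⟩ := hSE V hV (t.m ≫ u)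
    have h0 : t.m ≫ (u - e ≫ w1) = 0 := by
      rw [Preadditive.comp_sub, ← assoc, he, hw1, sub_self]
    obtain ⟨q, hq⟩ := aux_desc t.hses _ h0
    obtain ⟨w2, hw2⟩ := hQE V hV q
    refine ⟨biprod.desc w1 w2, ?_⟩
    rw [biprod.lift_desc, assoc, hw2, hq]
    abel
  ⟨⟨cokernel G, β, γ, hrow3, hextBot⟩, G, F, hGF, hGE, by
    intro LS LQ
    apply aux_cov 𝒲 hGF
    intro V hV v
    obtain ⟨p, hp⟩ := LQ V hV (v ≫ γ)
    have hd : (v - p ≫ biprod.inr ≫ F) ≫ γ = 0 := by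
      rw [Preadditive.sub_comp, assoc, assoc, hγ, biprod.inr_desc, hp, sub_self]
    obtain ⟨c, hc⟩ := aux_lift hrow3 _ hd
    obtain ⟨m', hm'⟩ := LS V hV c
    refine ⟨biprod.lift m' p, ?_⟩
    rw [biprod.lift_eq, Preadditive.add_comp, assoc, assoc, ← hβ, ← assoc m' fS, hm', hc]
    abel⟩

end Step


section TowerSeq

variable (𝒲 : Set C) {Y1 Y0 : C} {W0 W1 : ℕ → C}

noncomputable def auxStepAt (R0 : CoproperCoresolution 𝒲 Y0 W0)
    (R1 : CoproperCoresolution 𝒲 Y1 W1) {i : ℕ}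
    (t : ExtTower 𝒲 (R0.K i) (R1.K (i + 1))) :=
  aux_step 𝒲 (R0.g i) (R0.f i) (R1.g (i + 1)) (R1.f (i + 1)) (R0.mem i) (R1.mem (i + 1))
    (R0.ses i) (R1.ses (i + 1))
    (fun V hV u => (R0.coproper i V hV).2.2 u)
    (fun V hV u => (R1.coproper (i + 1) V hV).2.2 u) t

noncomputable def auxTower (R0 : CoproperCoresolution 𝒲 Y0 W0)
    (R1 : CoproperCoresolution 𝒲 Y1 W1) (t0 : ExtTower 𝒲 (R0.K 0) (R1.K 1)) :
    ∀ i, ExtTower 𝒲 (R0.K i) (R1.K (i + 1)) :=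
  fun i => Nat.rec t0 (fun _ t => (auxStepAt 𝒲 R0 R1 t).1) i

noncomputable def auxConn (R0 : CoproperCoresolution 𝒲 Y0 W0)
    (R1 : CoproperCoresolution 𝒲 Y1 W1) (t0 : ExtTower 𝒲 (R0.K 0) (R1.K 1)) (i : ℕ) :=
  auxStepAt 𝒲 R0 R1 (auxTower 𝒲 R0 R1 t0 i)

lemma auxTower_succ (R0 : CoproperCoresolution 𝒲 Y0 W0)
    (R1 : CoproperCoresolution 𝒲 Y1 W1) (t0 : ExtTower 𝒲 (R0.K 0) (R1.K 1)) (i : ℕ) :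
    auxTower 𝒲 R0 R1 t0 (i + 1) = (auxConn 𝒲 R0 R1 t0 i).1 :=
  rfl

end TowerSeq

/-- Constructing a coproper `𝒲`-coresolution of the last term of a short
exact sequence `0→Y₁→Y₀→Y→0` from coproper `𝒲`-coresolutions of the other two terms,
when `𝒲` is closed under isomorphisms, finite direct sums and cokernels of monomorphisms. -/
theorem stmt_9 (𝒲 : Set C)
    (hiso : ∀ {U V : C}, (U ≅ V) → U ∈ 𝒲 → V ∈ 𝒲)
    (hsum : ∀ {U V : C}, U ∈ 𝒲 → V ∈ 𝒲 → (U ⊞ V) ∈ 𝒲)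
    (hcoker : ∀ {A B Z : C} (f : A ⟶ B) (g : B ⟶ Z), SES f g → A ∈ 𝒲 → B ∈ 𝒲 → Z ∈ 𝒲)
    {Y1 Y0 Y : C} (x : Y1 ⟶ Y0) (y : Y0 ⟶ Y) (hses : SES x y)
    (W0 W1 : ℕ → C)
    (R0 : CoproperCoresolution 𝒲 Y0 W0) (R1 : CoproperCoresolution 𝒲 Y1 W1) :
    ∃ W : C, W ∈ 𝒲 ∧
      -- the short exact sequence 0 → W₁⁰ → W₀⁰ ⊕ W₁¹ → W → 0
      (∃ (u : W1 0 ⟶ W0 0 ⊞ W1 1) (v : W0 0 ⊞ W1 1 ⟶ W), SES u v) ∧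
      -- (1) a coproper 𝒲-coresolution of Y with 0-th term W and i-th term W₀ⁱ ⊕ W₁^{i+1} (i ≥ 1)
      Nonempty (CoproperCoresolution 𝒲 Y
        (fun i => match i with | 0 => W | n + 1 => W0 (n + 1) ⊞ W1 (n + 2))) ∧
      -- (2) if everything in sight is Hom(𝒲,-)-exact, the coresolution can be chosen
      -- Hom(𝒲,-)-exact as well
      (R0.IsCovExact → R1.IsCovExact → CovExact 𝒲 x y →
        ∃ R : CoproperCoresolution 𝒲 Y
            (fun i => match i with | 0 => W | n + 1 => W0 (n + 1) ⊞ W1 (n + 2)),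
          R.IsCovExact) := by
  classical
  -- transport the short exact sequence along the object equalities `R0.K 0 = Y0`, `R1.K 0 = Y1`
  let x' : R1.K 0 ⟶ R0.K 0 := eqToHom R1.hK ≫ x ≫ eqToHom R0.hK.symm
  let y' : R0.K 0 ⟶ Y := eqToHom R0.hK ≫ y
  have hses' : SES x' y' := by
    refine aux_ofIso (eqToIso R1.hK.symm) (eqToIso R0.hK.symm) (Iso.refl Y) ?_ ?_ hses
    · simp [x', eqToIso.hom, eqToHom_trans_assoc]
    · simp [y']
  -- the pushout `P = cokernel j`
  let j : R1.K 0 ⟶ R0.K 0 ⊞ W1 0 := biprod.lift x' (-(R1.g 0))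
  have hjfst : j ≫ biprod.fst = x' := biprod.lift_fst _ _
  have hjsnd : j ≫ biprod.snd = -(R1.g 0) := biprod.lift_snd _ _
  haveI hmj : Mono j := by
    apply Preadditive.mono_of_cancel_zero
    intro P u hu
    have h := hu =≫ biprod.fst
    rw [assoc, hjfst, zero_comp] at h
    haveI := aux_mono hses'
    exact zero_of_comp_mono x' h
  let π : (R0.K 0 ⊞ W1 0) ⟶ cokernel j := cokernel.π j
  have hσ0 : j ≫ biprod.desc 0 (R1.f 0) = 0 := by
    show biprod.lift x' (-(R1.g 0)) ≫ biprod.desc 0 (R1.f 0) = 0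
    rw [biprod.lift_desc]
    simp [Preadditive.neg_comp, aux_w (R1.ses 0)]
  let σ : cokernel j ⟶ R1.K 1 := cokernel.desc j _ hσ0
  have hρ0 : j ≫ biprod.desc y' 0 = 0 := by
    rw [biprod.lift_desc, comp_zero, add_zero, aux_w hses']
  let ρ : cokernel j ⟶ Y := cokernel.desc j _ hρ0
  let iY : R0.K 0 ⟶ cokernel j := biprod.inl ≫ π
  let iW : W1 0 ⟶ cokernel j := biprod.inr ≫ π
  have hnegses : SES (-(R1.g 0)) (R1.f 0) := by
    refine aux_ofIso (Iso.mk (-𝟙 (R1.K 0)) (-𝟙 (R1.K 0)) (by simp) (by simp))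
      (Iso.refl _) (Iso.refl _) ?_ ?_ (R1.ses 0)
    · simp
    · simp
  have hsesiY : SES iY σ := by
    refine aux_33 (aux_ses_zero_id (R1.K 0)) (aux_split_inl (R0.K 0) (W1 0))
      (aux_ses_zero_id (R0.K 0)) (aux_cok j) hnegses ?_ ?_ ?_ ?_
    · simp
    · simp [j]
    · simp [iY, π]
    · have h : π ≫ σ = biprod.desc 0 (R1.f 0) := cokernel.π_desc _ _ _
      rw [h]
      apply biprod.hom_ext' <;> simp
  have hsesiW : SES iW ρ := by
    refine aux_33 (aux_ses_zero_id (R1.K 0)) (aux_split_inr (R0.K 0) (W1 0))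
      (aux_ses_zero_id (W1 0)) (aux_cok j) hses' ?_ ?_ ?_ ?_
    · simp
    · simp [j]
    · simp [iW, π]
    · have h : π ≫ ρ = biprod.desc y' 0 := cokernel.π_desc _ _ _
      rw [h]
      apply biprod.hom_ext' <;> simp
  have hextP : ∀ V ∈ 𝒲, ∀ u : R0.K 0 ⟶ V, ∃ w : cokernel j ⟶ V, iY ≫ w = u := by
    intro V hV u
    obtain ⟨w, hw⟩ := (R1.coproper 0 V hV).2.2 (x' ≫ u)
    have hw' : R1.g 0 ≫ w = x' ≫ u := hw
    have hjw : j ≫ biprod.desc u w = 0 := by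
      rw [biprod.lift_desc, Preadditive.neg_comp, hw', add_neg_cancel]
    exact ⟨cokernel.desc j _ hjw, by
      show (biprod.inl ≫ π) ≫ _ = u
      rw [assoc, cokernel.π_desc, biprod.inl_desc]⟩
  -- the tower of extensions
  let t0 : ExtTower 𝒲 (R0.K 0) (R1.K 1) := ⟨cokernel j, iY, σ, hsesiY, hextP⟩
  let conn := auxConn 𝒲 R0 R1 t0
  let G0 : cokernel j ⟶ W0 0 ⊞ W1 1 := (conn 0).2.1
  let F0 := (conn 0).2.2.1
  have hGF0 : SES G0 F0 := (conn 0).2.2.2.1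
  have hGE0 : ∀ V ∈ 𝒲, ∀ u : cokernel j ⟶ V, ∃ w : W0 0 ⊞ W1 1 ⟶ V, G0 ≫ w = u :=
    (conn 0).2.2.2.2.1
  -- the object `W`
  let u0 : W1 0 ⟶ W0 0 ⊞ W1 1 := iW ≫ G0
  haveI hmu0 : Mono u0 := by
    haveI := aux_mono hsesiW; haveI := aux_mono hGF0
    exact mono_comp _ _
  let πW := cokernel.π u0
  have hsesW : SES u0 πW := aux_cok u0
  have hWmem : cokernel u0 ∈ 𝒲 := hcoker u0 πW hsesW (R1.mem 0) (hsum (R0.mem 0) (R1.mem 1))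
  have hGπ0 : iW ≫ (G0 ≫ πW) = 0 := by
    rw [← assoc]
    exact cokernel.condition u0
  obtain ⟨ι, hι⟩ := aux_desc hsesiW (G0 ≫ πW) hGπ0
  have hu0F0 : u0 ≫ F0 = 0 := by
    show (iW ≫ G0) ≫ F0 = 0
    rw [assoc, aux_w hGF0, comp_zero]
  let τ : cokernel u0 ⟶ (conn 0).1.T := cokernel.desc u0 F0 hu0F0
  have hsesτ : SES ι τ := by
    refine aux_33 (aux_ses_id_zero (W1 0)) hGF0 hsesiW (aux_cok u0)
      (aux_ses_zero_id _) ?_ ?_ hι.symm ?_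
    · rw [id_comp]
    · simp [hu0F0]
    · rw [comp_id]
      exact (cokernel.π_desc _ _ _).symm
  have hextτ : ∀ V ∈ 𝒲, ∀ u : Y ⟶ V, ∃ w : cokernel u0 ⟶ V, ι ≫ w = u := by
    intro V hV u
    obtain ⟨c, hc⟩ := hGE0 V hV (ρ ≫ u)
    have hvan : u0 ≫ c = 0 := by
      show (iW ≫ G0) ≫ c = 0
      rw [assoc, hc, ← assoc, aux_w hsesiW, zero_comp]
    refine ⟨cokernel.desc u0 c hvan, ?_⟩
    haveI := aux_epi hsesiW
    rw [← cancel_epi ρ, ← assoc, hι, assoc, cokernel.π_desc, hc]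
  -- the coproper coresolution of `Y`
  let KY : ℕ → C := fun i => Nat.casesOn i Y (fun n => (auxTower 𝒲 R0 R1 t0 (n + 1)).T)
  let Rres : CoproperCoresolution 𝒲 Y
      (fun i => match i with | 0 => cokernel u0 | n + 1 => W0 (n + 1) ⊞ W1 (n + 2)) :=
    { K := KY
      hK := rfl
      g := fun i => match i with | 0 => ι | n + 1 => (conn (n + 1)).2.1
      f := fun i => match i with | 0 => τ | n + 1 => (conn (n + 1)).2.2.1
      mem := fun i => match i with
        | 0 => hWmem
        | n + 1 => hsum (R0.mem (n + 1)) (R1.mem (n + 2))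
      ses := fun i => match i with | 0 => hsesτ | n + 1 => (conn (n + 1)).2.2.2.1
      coproper := fun i => match i with
        | 0 => aux_contra 𝒲 hsesτ hextτ
        | n + 1 => aux_contra 𝒲 (conn (n + 1)).2.2.2.1 (conn (n + 1)).2.2.2.2.1 }
  refine ⟨cokernel u0, hWmem, ⟨u0, πW, hsesW⟩, ⟨Rres⟩, ?_⟩
  -- part (2)
  intro h0 h1 _
  have covG : ∀ i, CovExact 𝒲 (conn i).2.1 (conn i).2.2.1 := fun i =>
    (conn i).2.2.2.2.2 (fun V hV u => (h0 i V hV).2.2 u)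
      (fun V hV u => (h1 (i + 1) V hV).2.2 u)
  have covτ : CovExact 𝒲 ι τ := by
    apply aux_cov 𝒲 hsesτ
    intro V hV v
    obtain ⟨pp, hpp⟩ := (covG 0 V hV).2.2 v
    have hpp' : pp ≫ F0 = v := hpp
    refine ⟨pp ≫ πW, ?_⟩
    show (pp ≫ πW) ≫ τ = v
    rw [assoc]
    show pp ≫ cokernel.π u0 ≫ cokernel.desc u0 F0 hu0F0 = v
    rw [cokernel.π_desc, hpp']
  refine ⟨Rres, ?_⟩
  intro i
  cases i with
  | zero => exact covτ
  | succ n => exact covG (n + 1)
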